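/- Let y, z ∈ ℂ with z ≠ 0 and let f₀ > 0 be real. Then f₀·(y + z)² + (y − z)² = 0 holds if and only if there exists ψ ∈ ℝ with cos(ψ/2) ≠ 0 such that y = e^{iψ}·z and f₀ = tan²(ψ/2). In particular, if the equation holds then |y| = |z|. -/

import Mathlib

open Complex in
private lemma exp_re_mul_I (ψ : ℝ) :
    Complex.exp ((ψ : ℂ) * Complex.I) =
      ((Real.cos ψ : ℝ) : ℂ) + ((Real.sin ψ : ℝ) : ℂ) * Complex.I := by
  rw [Complex.exp_mul_I]
  simp [Complex.ofReal_cos, Complex.ofReal_sin]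

private lemma cos_two_arctan (t : ℝ) :
    Real.cos (2 * Real.arctan t) = (1 - t ^ 2) / (1 + t ^ 2) := by
  have h1 : (0:ℝ) < 1 + t ^ 2 := by positivity
  rw [Real.cos_two_mul, Real.cos_arctan, div_pow, one_pow, Real.sq_sqrt h1.le]
  field_simp
  ring

private lemma sin_two_arctan (t : ℝ) :
    Real.sin (2 * Real.arctan t) = 2 * t / (1 + t ^ 2) := by
  have h1 : (0:ℝ) < 1 + t ^ 2 := by positivity
  rw [Real.sin_two_mul, Real.sin_arctan, Real.cos_arctan, mul_assoc, div_mul_div_comm,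
    Real.mul_self_sqrt h1.le]
  ring

/-- If `y * (t + I) = z * (I - t)` then `y = e^{iψ} z` with `ψ = 2 arctan t`. -/
private lemma aux_exp (t : ℝ) (y z : ℂ)
    (h : y * ((t : ℂ) + Complex.I) = z * (Complex.I - (t : ℂ))) :
    y = Complex.exp (((2 * Real.arctan t : ℝ) : ℂ) * Complex.I) * z := by
  have h1 : (0:ℝ) < 1 + t ^ 2 := by positivity
  have h1c : ((1 + t ^ 2 : ℝ) : ℂ) ≠ 0 := by exact_mod_cast h1.ne'
  set E := Complex.exp (((2 * Real.arctan t : ℝ) : ℂ) * Complex.I) with hE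
  have h1c' : (1 : ℂ) + (t : ℂ) ^ 2 ≠ 0 := by exact_mod_cast h1.ne'
  have hexp : E * ((1 + t ^ 2 : ℝ) : ℂ) = ((1 - t ^ 2 : ℝ) : ℂ) + 2 * (t : ℂ) * Complex.I := by
    rw [hE, exp_re_mul_I, cos_two_arctan, sin_two_arctan]
    push_cast
    field_simp
  have htI : ((t : ℂ) + Complex.I) ≠ 0 := by
    intro hc
    have := congrArg Complex.im hc
    simp at this
  have hexpI : E * ((t : ℂ) + Complex.I) = Complex.I - (t : ℂ) := by
    apply mul_right_cancel₀ h1c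
    push_cast at hexp ⊢
    linear_combination ((t : ℂ) + Complex.I) * hexp +
      (2 * (t:ℂ)) * Complex.I_sq
  apply mul_right_cancel₀ htI
  linear_combination h - z * hexpI

/-- For `z ≠ 0` and `f₀ > 0`, the vanishing of the discriminant
`f₀(y+z)² + (y−z)² = 0` holds iff `y = e^{iψ}z` and `f₀ = tan²(ψ/2)` for some real `ψ`
with `cos(ψ/2) ≠ 0`; in particular it implies `|y| = |z|`. -/
theorem stmt_16 (y z : ℂ) (hz : z ≠ 0) (f₀ : ℝ) (hf₀ : 0 < f₀) :
    ((f₀ : ℂ) * (y + z) ^ 2 + (y - z) ^ 2 = 0 ↔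
      ∃ ψ : ℝ, Real.cos (ψ / 2) ≠ 0 ∧ y = Complex.exp ((ψ : ℂ) * Complex.I) * z ∧
        f₀ = Real.tan (ψ / 2) ^ 2) ∧
      ((f₀ : ℂ) * (y + z) ^ 2 + (y - z) ^ 2 = 0 →
        ‖y‖ = ‖z‖) := by
  have main : (f₀ : ℂ) * (y + z) ^ 2 + (y - z) ^ 2 = 0 ↔
      ∃ ψ : ℝ, Real.cos (ψ / 2) ≠ 0 ∧ y = Complex.exp ((ψ : ℂ) * Complex.I) * z ∧
        f₀ = Real.tan (ψ / 2) ^ 2 := by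
    constructor
    · intro hE
      set t := Real.sqrt f₀ with htdef
      have ht2 : t ^ 2 = f₀ := Real.sq_sqrt hf₀.le
      have htc : ((t : ℝ) : ℂ) ^ 2 = (f₀ : ℂ) := by exact_mod_cast congrArg (fun x : ℝ => (x : ℂ)) ht2
      have hfac : ((t : ℂ) * (y + z) - Complex.I * (y - z)) *
          ((t : ℂ) * (y + z) + Complex.I * (y - z)) = 0 := by
        linear_combination hE + (y + z) ^ 2 * htc - (y - z) ^ 2 * Complex.I_sq
      have htan : ∀ u : ℝ, f₀ = u ^ 2 → f₀ = Real.tan (2 * Real.arctan u / 2) ^ 2 := by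
        intro u hu
        have : 2 * Real.arctan u / 2 = Real.arctan u := by ring
        rw [this, Real.tan_arctan, hu]
      have hcosne : ∀ u : ℝ, Real.cos (2 * Real.arctan u / 2) ≠ 0 := by
        intro u
        have : 2 * Real.arctan u / 2 = Real.arctan u := by ring
        rw [this]
        exact (Real.cos_arctan_pos u).ne'
      rcases mul_eq_zero.mp hfac with hc | hc
      · -- t(y+z) = I(y−z): use ψ = 2 arctan (−t)
        refine ⟨2 * Real.arctan (-t), hcosne _, ?_, htan _ (by rw [neg_pow]; simp [ht2.symm])⟩
        apply aux_exp (-t) y z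
        push_cast
        linear_combination -hc
      · -- t(y+z) = −I(y−z): use ψ = 2 arctan t
        refine ⟨2 * Real.arctan t, hcosne _, ?_, htan _ ht2.symm⟩
        apply aux_exp t y z
        linear_combination hc
    · rintro ⟨ψ, hcψ, hy, hf⟩
      set c := Real.cos (ψ / 2) with hcdef
      set s := Real.sin (ψ / 2) with hsdef
      have hcC : (c : ℂ) ≠ 0 := by exact_mod_cast hcψ
      have hsc' : (s : ℂ) ^ 2 + (c : ℂ) ^ 2 = 1 := by
        exact_mod_cast Real.sin_sq_add_cos_sq (ψ / 2)
      have hfcR : f₀ * c ^ 2 = s ^ 2 := by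
        rw [hf, Real.tan_eq_sin_div_cos, ← hcdef, ← hsdef]
        field_simp
      have hfc : (f₀ : ℂ) * (c : ℂ) ^ 2 = (s : ℂ) ^ 2 := by exact_mod_cast hfcR
      have hψ2 : ψ = 2 * (ψ / 2) := by ring
      have hcos2 : Real.cos ψ = 2 * c ^ 2 - 1 := by
        conv_lhs => rw [hψ2]
        rw [Real.cos_two_mul, ← hcdef]
      have hsin2 : Real.sin ψ = 2 * s * c := by
        conv_lhs => rw [hψ2]
        rw [Real.sin_two_mul, ← hcdef, ← hsdef]
        try ring
      have hexp : Complex.exp ((ψ : ℂ) * Complex.I) =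
          ((2 * c ^ 2 - 1 : ℝ) : ℂ) + ((2 * s * c : ℝ) : ℂ) * Complex.I := by
        rw [exp_re_mul_I, hcos2, hsin2]
      rw [hy, hexp]
      set I := Complex.I
      -- c² times the goal LHS:
      have key : (s : ℂ) ^ 2 * ((2 * (c:ℂ) ^ 2 + 2 * (s:ℂ) * (c:ℂ) * I) * z) ^ 2 +
          (c : ℂ) ^ 2 * ((2 * (c:ℂ) ^ 2 - 2 + 2 * (s:ℂ) * (c:ℂ) * I) * z) ^ 2 = 0 := by
        linear_combination
          (4 * z ^ 2 * (c:ℂ) ^ 2 * (2 * (s:ℂ) * I * ((c:ℂ) + (s:ℂ) * I) +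
            ((s:ℂ) ^ 2 + (c:ℂ) ^ 2 - 1) - 2 * (s:ℂ) ^ 2 * (I ^ 2 + 1))) * hsc' +
          (4 * z ^ 2 * (c:ℂ) ^ 2 * ((s:ℂ) ^ 2 * ((c:ℂ) + (s:ℂ) * I) ^ 2 -
            2 * (s:ℂ) ^ 3 * I * ((c:ℂ) + (s:ℂ) * I) -
            2 * ((s:ℂ) ^ 2 + (c:ℂ) ^ 2 - 1) * (s:ℂ) ^ 2 +
            (s:ℂ) ^ 4 * (I ^ 2 + 1))) * Complex.I_sq +
          (8 * (s:ℂ) ^ 2 * (c:ℂ) ^ 2 * z ^ 2 * ((c:ℂ) ^ 2 + (s:ℂ) ^ 2 - 1)) * Complex.I_sq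
      have hc2 : (c : ℂ) ^ 2 * ((f₀ : ℂ) *
          ((((2 * c ^ 2 - 1 : ℝ) : ℂ) + ((2 * s * c : ℝ) : ℂ) * I) * z + z) ^ 2 +
          ((((2 * c ^ 2 - 1 : ℝ) : ℂ) + ((2 * s * c : ℝ) : ℂ) * I) * z - z) ^ 2) = 0 := by
        push_cast
        linear_combination key +
          (((2 * (c:ℂ) ^ 2 + 2 * (s:ℂ) * (c:ℂ) * I) * z) ^ 2) * hfc
      have := mul_eq_zero.mp hc2
      rcases this with h | h
      · exact absurd h (pow_ne_zero 2 hcC)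
      · exact h
  refine ⟨main, fun hE => ?_⟩
  obtain ⟨ψ, -, hy, -⟩ := main.mp hE
  rw [hy, norm_mul, Complex.norm_exp_ofReal_mul_I, one_mul]
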